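/- For CES utilities and the Fisher market with Leontief valuations: in an ε-market equilibrium (p', x') with Leontief utilities where all buyers exhaust their budgets, each buyer's optimal utility at prices p' equals Bᵢ/φᵢ(p') with φᵢ(p') = Σ_j v_{i,j} p'_j, and the Nash social welfare of x' is at least 1/(1+ε) times the optimal Nash social welfare: ∏ᵢ uᵢ(x*ᵢ)^{Bᵢ} ≤ (1+ε)^𝓑 ∏ᵢ uᵢ(x'ᵢ)^{Bᵢ}. -/
import Mathlib


/-- Leontief utility: minimum over demanded goods of `x j / v j`. -/
noncomputable def leontief {m : ℕ} (v x : Fin m → ℝ) : ℝ :=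
  ⨅ j : {j : Fin m // 0 < v j}, x j.val / v j.val

/-- Money needed per unit of utility at prices `p` for Leontief valuation `v`. -/
def phi {m : ℕ} (v p : Fin m → ℝ) : ℝ := ∑ j, v j * p j

lemma leontief_nonneg {m : ℕ} {v x : Fin m → ℝ} (hx : ∀ j, 0 ≤ x j) :
    0 ≤ leontief v x :=
  Real.iInf_nonneg fun j => div_nonneg (hx j.1) j.2.le

lemma leontief_le {m : ℕ} {v x : Fin m → ℝ} (hx : ∀ j, 0 ≤ x j) {j : Fin m}
    (hj : 0 < v j) : leontief v x ≤ x j / v j := by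
  apply ciInf_le _ (⟨j, hj⟩ : {j : Fin m // 0 < v j})
  exact ⟨0, by rintro _ ⟨k, rfl⟩; exact div_nonneg (hx k.1) k.2.le⟩

lemma leontief_const_mul {m : ℕ} {v : Fin m → ℝ} (hne : ∃ j, 0 < v j) (c : ℝ) :
    leontief v (fun j => c * v j) = c := by
  have : Nonempty {j : Fin m // 0 < v j} := ⟨⟨hne.choose, hne.choose_spec⟩⟩
  unfold leontief
  have h : ∀ j : {j : Fin m // 0 < v j}, c * v j.1 / v j.1 = c :=
    fun j => mul_div_cancel_right₀ c (ne_of_gt j.2)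
  simp only [h]
  exact ciInf_const

/-- In an ε-market equilibrium `(p', x')` with Leontief utilities, each buyer's
optimal utility at prices `p'` equals `Bᵢ/φᵢ(p')`, and the Nash social welfare
of `x'` is at least `1/(1+ε)` of the optimum:
`∏ᵢ uᵢ(x*ᵢ)^{Bᵢ} ≤ (1+ε)^𝓑 ∏ᵢ uᵢ(x'ᵢ)^{Bᵢ}`. -/
theorem eps_market_equilibrium_nsw (n m : ℕ) (v : Fin n → Fin m → ℝ)
    (B : Fin n → ℝ) (ε : ℝ) (x' xstar : Fin n → Fin m → ℝ) (p' : Fin m → ℝ)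
    (hB : ∀ i, 1 ≤ B i) (hε : 0 < ε)
    (hv : ∀ i j, 0 ≤ v i j) (hvpos : ∀ i, ∃ j, 0 < v i j)
    (hp' : ∀ j, 0 < p' j) (hp'sum : ∑ j, p' j = ∑ i, B i)
    (hx' : ∀ i j, 0 ≤ x' i j) (hx'feas : ∀ j, ∑ i, x' i j ≤ 1)
    (hbudget : ∀ i, ∑ j, p' j * x' i j = B i)
    (hεopt : ∀ i, ∀ y : Fin m → ℝ, (∀ j, 0 ≤ y j) → ∑ j, p' j * y j ≤ B i →
      leontief (v i) y ≤ (1 + ε) * leontief (v i) (x' i))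
    (hxstar : ∀ i j, 0 ≤ xstar i j) (hxstarfeas : ∀ j, ∑ i, xstar i j ≤ 1)
    (hopt : ∀ x : Fin n → Fin m → ℝ, (∀ i j, 0 ≤ x i j) →
      (∀ j, ∑ i, x i j ≤ 1) →
      ∑ i, B i * Real.log (leontief (v i) (x i)) ≤
        ∑ i, B i * Real.log (leontief (v i) (xstar i))) :
    (∀ i, IsGreatest
        {t | ∃ y : Fin m → ℝ, (∀ j, 0 ≤ y j) ∧ ∑ j, p' j * y j ≤ B i ∧
          t = leontief (v i) y}
        (B i / phi (v i) p')) ∧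
      ∏ i, leontief (v i) (xstar i) ^ B i ≤
        (1 + ε) ^ (∑ i, B i) * ∏ i, leontief (v i) (x' i) ^ B i := by
  have hBpos : ∀ i, 0 < B i := fun i => lt_of_lt_of_le one_pos (hB i)
  have hphi : ∀ i, 0 < phi (v i) p' := by
    intro i
    obtain ⟨j, hj⟩ := hvpos i
    refine Finset.sum_pos' (fun k _ => mul_nonneg (hv i k) (hp' k).le) ?_
    exact ⟨j, Finset.mem_univ j, mul_pos hj (hp' j)⟩
  -- Part 1
  have part1 : ∀ i, IsGreatest
      {t | ∃ y : Fin m → ℝ, (∀ j, 0 ≤ y j) ∧ ∑ j, p' j * y j ≤ B i ∧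
        t = leontief (v i) y} (B i / phi (v i) p') := by
    intro i
    constructor
    · refine ⟨fun j => (B i / phi (v i) p') * v i j,
        fun j => mul_nonneg (div_nonneg (hBpos i).le (hphi i).le) (hv i j), ?_, ?_⟩
      · have : ∑ j, p' j * ((B i / phi (v i) p') * v i j)
            = (B i / phi (v i) p') * phi (v i) p' := by
          rw [phi, Finset.mul_sum]; congr 1; ext j; ring
        rw [this, div_mul_cancel₀ _ (hphi i).ne']
      · rw [leontief_const_mul (hvpos i)]
    · rintro t ⟨y, hy, hbud, rfl⟩
      have ht0 : 0 ≤ leontief (v i) y := leontief_nonneg hy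
      have key : leontief (v i) y * phi (v i) p' ≤ B i := by
        have h1 : leontief (v i) y * phi (v i) p' = ∑ j, leontief (v i) y * (v i j * p' j) := by
          rw [phi, Finset.mul_sum]
        rw [h1]
        refine le_trans (Finset.sum_le_sum (fun j _ => ?_)) hbud
        rcases lt_or_eq_of_le (hv i j) with hvj | hvj
        · have := leontief_le hy hvj
          have h2 : leontief (v i) y * v i j ≤ y j := (le_div_iff₀ hvj).mp this
          calc leontief (v i) y * (v i j * p' j) = (leontief (v i) y * v i j) * p' j := by ring
            _ ≤ y j * p' j := by nlinarith [hp' j]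
            _ = p' j * y j := by ring
        · rw [← hvj]; simpa using mul_nonneg (hp' j).le (hy j)
      exact (le_div_iff₀ (hphi i)).mpr key
  refine ⟨part1, ?_⟩
  -- notation
  set u' : Fin n → ℝ := fun i => leontief (v i) (x' i) with hu'
  set us : Fin n → ℝ := fun i => leontief (v i) (xstar i) with hus
  have hus0 : ∀ i, 0 ≤ us i := fun i => leontief_nonneg (hxstar i)
  have hratio : ∀ i, B i / phi (v i) p' ≤ (1 + ε) * u' i := by
    intro i
    obtain ⟨y, hy1, hy2, hy3⟩ := (part1 i).1
    rw [hy3]; exact hεopt i y hy1 hy2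
  have hu'pos : ∀ i, 0 < u' i := by
    intro i
    have h1 : 0 < B i / phi (v i) p' := div_pos (hBpos i) (hphi i)
    nlinarith [hratio i]
  have hε1 : (0:ℝ) < 1 + ε := by linarith
  have hprodpos : 0 < ∏ i, u' i ^ B i :=
    Finset.prod_pos fun i _ => Real.rpow_pos_of_pos (hu'pos i) _
  by_cases hall : ∀ i, 0 < us i
  · -- log argument
    -- (b) ∑ us i * phi i ≤ ∑ B i
    have hb : ∑ i, us i * phi (v i) p' ≤ ∑ i, B i := by
      have h1 : ∀ i j, us i * (v i j * p' j) ≤ xstar i j * p' j := by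
        intro i j
        rcases lt_or_eq_of_le (hv i j) with hvj | hvj
        · have := leontief_le (hxstar i) hvj
          have h2 : us i * v i j ≤ xstar i j := (le_div_iff₀ hvj).mp this
          nlinarith [hp' j]
        · rw [← hvj]; simp only [zero_mul, mul_zero]
          exact mul_nonneg (hxstar i j) (hp' j).le
      calc ∑ i, us i * phi (v i) p' = ∑ i, ∑ j, us i * (v i j * p' j) := by
            apply Finset.sum_congr rfl; intro i _; rw [phi, Finset.mul_sum]
        _ ≤ ∑ i, ∑ j, xstar i j * p' j := by
            apply Finset.sum_le_sum; intro i _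
            exact Finset.sum_le_sum fun j _ => h1 i j
        _ = ∑ j, (∑ i, xstar i j) * p' j := by
            rw [Finset.sum_comm]; congr 1; ext j; rw [Finset.sum_mul]
        _ ≤ ∑ j, p' j := by
            apply Finset.sum_le_sum; intro j _
            nlinarith [hxstarfeas j, hp' j]
        _ = ∑ i, B i := hp'sum
    -- (a) per-buyer log bound
    have ha : ∀ i, B i * Real.log (us i) ≤
        B i * Real.log (B i / phi (v i) p') + (us i * phi (v i) p' - B i) := by
      intro i
      have hz : 0 < us i * phi (v i) p' / B i :=
        div_pos (mul_pos (hall i) (hphi i)) (hBpos i)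
      have hlog := Real.log_le_sub_one_of_pos hz
      have hsplit : Real.log (us i) =
          Real.log (B i / phi (v i) p') + Real.log (us i * phi (v i) p' / B i) := by
        rw [Real.log_div (mul_pos (hall i) (hphi i)).ne' (hBpos i).ne',
            Real.log_mul (hall i).ne' (hphi i).ne',
            Real.log_div (hBpos i).ne' (hphi i).ne']
        ring
      rw [hsplit, mul_add]
      have : B i * Real.log (us i * phi (v i) p' / B i)
          ≤ us i * phi (v i) p' - B i := by
        have h2 : B i * Real.log (us i * phi (v i) p' / B i)
            ≤ B i * (us i * phi (v i) p' / B i - 1) :=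
          mul_le_mul_of_nonneg_left hlog (hBpos i).le
        have h3 : B i * (us i * phi (v i) p' / B i - 1)
            = us i * phi (v i) p' - B i := by
          rw [mul_sub, mul_one, mul_div_cancel₀ _ (hBpos i).ne']
        linarith
      linarith
    -- (d) per-buyer: B log(B/phi) ≤ B log(1+ε) + B log u'
    have hd : ∀ i, B i * Real.log (B i / phi (v i) p') ≤
        B i * Real.log (1 + ε) + B i * Real.log (u' i) := by
      intro i
      have h1 : Real.log (B i / phi (v i) p') ≤ Real.log ((1 + ε) * u' i) :=
        Real.log_le_log (div_pos (hBpos i) (hphi i)) (hratio i)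
      rw [Real.log_mul hε1.ne' (hu'pos i).ne'] at h1
      nlinarith [hBpos i]
    have hsum : ∑ i, B i * Real.log (us i) ≤
        (∑ i, B i) * Real.log (1 + ε) + ∑ i, B i * Real.log (u' i) := by
      calc ∑ i, B i * Real.log (us i)
          ≤ ∑ i, (B i * Real.log (B i / phi (v i) p') + (us i * phi (v i) p' - B i)) :=
            Finset.sum_le_sum fun i _ => ha i
        _ = ∑ i, B i * Real.log (B i / phi (v i) p')
            + (∑ i, us i * phi (v i) p' - ∑ i, B i) := by
            rw [Finset.sum_add_distrib, Finset.sum_sub_distrib]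
        _ ≤ ∑ i, B i * Real.log (B i / phi (v i) p') := by linarith
        _ ≤ ∑ i, (B i * Real.log (1 + ε) + B i * Real.log (u' i)) :=
            Finset.sum_le_sum fun i _ => hd i
        _ = (∑ i, B i) * Real.log (1 + ε) + ∑ i, B i * Real.log (u' i) := by
            rw [Finset.sum_add_distrib, Finset.sum_mul]
    -- exponentiate
    have lhs_eq : ∏ i, us i ^ B i = Real.exp (∑ i, B i * Real.log (us i)) := by
      rw [Real.exp_sum]
      exact Finset.prod_congr rfl fun i _ => by
        rw [Real.rpow_def_of_pos (hall i), mul_comm]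
    have rhs_eq : (1 + ε) ^ (∑ i, B i) * ∏ i, u' i ^ B i
        = Real.exp ((∑ i, B i) * Real.log (1 + ε) + ∑ i, B i * Real.log (u' i)) := by
      rw [Real.exp_add, Real.exp_sum]
      congr 1
      · rw [Real.rpow_def_of_pos hε1, mul_comm]
      · exact Finset.prod_congr rfl fun i _ => by
          rw [Real.rpow_def_of_pos (hu'pos i), mul_comm]
    rw [lhs_eq, rhs_eq]
    exact Real.exp_le_exp.mpr hsum
  · -- some us i = 0, LHS product = 0
    push_neg at hall
    obtain ⟨i0, hi0⟩ := hall
    have hz : us i0 = 0 := le_antisymm hi0 (hus0 i0)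
    have : ∏ i, us i ^ B i = 0 := by
      apply Finset.prod_eq_zero (Finset.mem_univ i0)
      rw [hz, Real.zero_rpow (hBpos i0).ne']
    rw [this]
    positivity
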